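/- Verification of the induced regular boundary condition matrices in the limit point case (Section 3, Case 2): let M and N be n×2n complex matrices with rank M = n, M J M* = 0, rank N = n, and N J N* = 0, and let Θ ∈ M_{2n}(ℂ) satisfy Θ* J Θ = J. Define the 2n×2n matrices P := [M; 0_{n×2n}] (M on top of an n×2n zero block) and Q := −[0_{n×2n}; N]·Θ*·J (an n×2n zero block on top of N, multiplied by Θ*J). Then rank (P Q) = 2n (where (P Q) is the 2n×4n matrix obtained by placing P and Q side by side) and P J P* = Q J Q* = 0. -/

import Mathlib

open Matrix

noncomputable section

/-- The `2n × 2n` canonical symplectic matrix `J = [[0, -Iₙ],[Iₙ, 0]]`,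
with `ℂ^{2n}` modelled as functions on `Fin n ⊕ Fin n`. -/
def symJ (n : ℕ) : Matrix (Fin n ⊕ Fin n) (Fin n ⊕ Fin n) ℂ :=
  Matrix.fromBlocks 0 (-1) 1 0

lemma symJ_eq (n : ℕ) : symJ n = Matrix.J (Fin n) ℂ := rfl

lemma symJ_mul_symJ (n : ℕ) : symJ n * symJ n = -1 := by
  rw [symJ_eq]; exact Matrix.J_squared _ _

lemma symJ_conjTranspose (n : ℕ) : (symJ n)ᴴ = -symJ n := by
  simp only [symJ, Matrix.fromBlocks_conjTranspose, Matrix.fromBlocks_neg]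
  simp

lemma isUnit_det_symJ (n : ℕ) : IsUnit (symJ n).det := by
  rw [symJ_eq]; exact Matrix.isUnit_det_J _ _

lemma surj_of_rank_eq_card {m k : Type*} [Fintype m] [Fintype k] [DecidableEq m]
    (A : Matrix m k ℂ) (h : A.rank = Fintype.card m) :
    Function.Surjective A.mulVecLin := by
  rw [← LinearMap.range_eq_top]
  apply Submodule.eq_top_of_finrank_eq
  rw [← Matrix.rank, h, Module.finrank_pi]

lemma rank_fromBlocks_diag {m₁ m₂ k₁ k₂ : Type*} [Fintype m₁] [Fintype m₂] [Fintype k₁]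
    [Fintype k₂] [DecidableEq m₁] [DecidableEq m₂]
    (A : Matrix m₁ k₁ ℂ) (D : Matrix m₂ k₂ ℂ)
    (hA : A.rank = Fintype.card m₁) (hD : D.rank = Fintype.card m₂) :
    (Matrix.fromBlocks A 0 0 D).rank = Fintype.card m₁ + Fintype.card m₂ := by
  have hsurj : Function.Surjective (Matrix.fromBlocks A 0 0 D).mulVecLin := by
    intro y
    obtain ⟨x₁, hx₁⟩ := surj_of_rank_eq_card A hA (y ∘ Sum.inl)
    obtain ⟨x₂, hx₂⟩ := surj_of_rank_eq_card D hD (y ∘ Sum.inr)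
    refine ⟨Sum.elim x₁ x₂, ?_⟩
    rw [Matrix.mulVecLin_apply, Matrix.fromBlocks_mulVec]
    funext i
    cases i with
    | inl i => simpa using congrFun hx₁ i
    | inr i => simpa using congrFun hx₂ i
  rw [Matrix.rank, LinearMap.range_eq_top.mpr hsurj, finrank_top, Module.finrank_pi,
    Fintype.card_sum]

/-- Verification of the induced regular boundary condition matrices in the limit
point case (Section 3, Case 2). -/
theorem induced_boundary_matrices_lpc (n : ℕ) (hn : 0 < n)
    (M N : Matrix (Fin n) (Fin n ⊕ Fin n) ℂ)
    (Θ : Matrix (Fin n ⊕ Fin n) (Fin n ⊕ Fin n) ℂ)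
    (hrkM : M.rank = n) (hM : M * symJ n * Mᴴ = 0)
    (hrkN : N.rank = n) (hN : N * symJ n * Nᴴ = 0)
    (hΘ : Θᴴ * symJ n * Θ = symJ n) :
    (Matrix.fromCols (Matrix.fromRows M (0 : Matrix (Fin n) (Fin n ⊕ Fin n) ℂ))
        (-(Matrix.fromRows (0 : Matrix (Fin n) (Fin n ⊕ Fin n) ℂ) N) * Θᴴ * symJ n)).rank
        = 2 * n ∧
      (Matrix.fromRows M (0 : Matrix (Fin n) (Fin n ⊕ Fin n) ℂ)) * symJ n
          * (Matrix.fromRows M (0 : Matrix (Fin n) (Fin n ⊕ Fin n) ℂ))ᴴ = 0 ∧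
      (-(Matrix.fromRows (0 : Matrix (Fin n) (Fin n ⊕ Fin n) ℂ) N) * Θᴴ * symJ n) * symJ n
          * (-(Matrix.fromRows (0 : Matrix (Fin n) (Fin n ⊕ Fin n) ℂ) N) * Θᴴ * symJ n)ᴴ
          = 0 := by
  have hJu := isUnit_det_symJ n
  -- Θᴴ has unit determinant
  have hdet : Θᴴ.det * (symJ n).det * Θ.det = (symJ n).det := by
    simpa [Matrix.det_mul] using congrArg Matrix.det hΘ
  have hΘΘ : Θᴴ.det * Θ.det = 1 := by
    apply hJu.mul_left_cancel
    rw [mul_one]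
    rw [show (symJ n).det * (Θᴴ.det * Θ.det) = Θᴴ.det * (symJ n).det * Θ.det by ring, hdet]
  have hΘHu : IsUnit Θᴴ.det := IsUnit.of_mul_eq_one _ hΘΘ
  -- second assertion
  have h2 : (Matrix.fromRows M (0 : Matrix (Fin n) (Fin n ⊕ Fin n) ℂ)) * symJ n
      * (Matrix.fromRows M (0 : Matrix (Fin n) (Fin n ⊕ Fin n) ℂ))ᴴ = 0 := by
    rw [Matrix.fromRows_mul, Matrix.conjTranspose_fromRows_eq_fromCols_conjTranspose,
      Matrix.fromRows_mul, Matrix.mul_fromCols, Matrix.mul_fromCols, hM]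
    simp [Matrix.fromRows_zero, Matrix.fromCols_zero]
  -- key simplification : Q J Qᴴ = R J Rᴴ for Q = R Θᴴ J
  have key : ∀ R : Matrix (Fin n ⊕ Fin n) (Fin n ⊕ Fin n) ℂ,
      (R * Θᴴ * symJ n) * symJ n * (R * Θᴴ * symJ n)ᴴ = R * symJ n * Rᴴ := by
    intro R
    rw [Matrix.conjTranspose_mul, Matrix.conjTranspose_mul, symJ_conjTranspose,
      Matrix.conjTranspose_conjTranspose]
    have hJJJ : ∀ X : Matrix (Fin n ⊕ Fin n) (Fin n ⊕ Fin n) ℂ,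
        symJ n * (symJ n * (-symJ n * X)) = symJ n * X := by
      intro X
      rw [← Matrix.mul_assoc (symJ n) (symJ n), symJ_mul_symJ]
      simp
    calc R * Θᴴ * symJ n * symJ n * (-symJ n * (Θ * Rᴴ))
        = R * ((Θᴴ * symJ n * Θ) * Rᴴ) := by
          simp only [Matrix.mul_assoc]
          rw [hJJJ]
      _ = R * symJ n * Rᴴ := by rw [hΘ, Matrix.mul_assoc]
  have hRneg : -(Matrix.fromRows (0 : Matrix (Fin n) (Fin n ⊕ Fin n) ℂ) N)
      = Matrix.fromRows 0 (-N) := by rw [Matrix.fromRows_neg, neg_zero]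
  have h3 : (-(Matrix.fromRows (0 : Matrix (Fin n) (Fin n ⊕ Fin n) ℂ) N) * Θᴴ * symJ n) * symJ n
      * (-(Matrix.fromRows (0 : Matrix (Fin n) (Fin n ⊕ Fin n) ℂ) N) * Θᴴ * symJ n)ᴴ = 0 := by
    rw [key]
    simp only [Matrix.neg_mul, Matrix.conjTranspose_neg, Matrix.mul_neg, neg_neg]
    rw [Matrix.fromRows_mul, Matrix.conjTranspose_fromRows_eq_fromCols_conjTranspose,
      Matrix.fromRows_mul, Matrix.mul_fromCols, Matrix.mul_fromCols, hN]
    simp [Matrix.fromRows_zero, Matrix.fromCols_zero]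
  refine ⟨?_, h2, h3⟩
  -- rank
  have hQ : -(Matrix.fromRows (0 : Matrix (Fin n) (Fin n ⊕ Fin n) ℂ) N) * Θᴴ * symJ n
      = Matrix.fromRows 0 ((-N) * Θᴴ * symJ n) := by
    rw [hRneg, Matrix.fromRows_mul, Matrix.fromRows_mul]
    simp
  rw [hQ, Matrix.fromCols_fromRows_eq_fromBlocks]
  have hrkN' : ((-N) * Θᴴ * symJ n).rank = n := by
    rw [Matrix.rank_mul_eq_left_of_isUnit_det _ _ hJu,
      Matrix.rank_mul_eq_left_of_isUnit_det _ _ hΘHu]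
    have : (-N) = N * (-1 : Matrix (Fin n ⊕ Fin n) (Fin n ⊕ Fin n) ℂ) := by simp
    rw [this, Matrix.rank_mul_eq_left_of_isUnit_det _ _ (by
      rw [Matrix.det_neg, Matrix.det_one, Fintype.card_sum, Fintype.card_fin]
      simp [← two_mul, pow_mul]), hrkN]
  have := rank_fromBlocks_diag M ((-N) * Θᴴ * symJ n)
    (by simpa using hrkM) (by simpa using hrkN')
  rw [this, Fintype.card_fin, two_mul]

end
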